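/- Let S be a finite set, let π₁ : ℝ × S → ℝ be a nonnegative joint density (∑_{s∈S} ∫_ℝ π₁(a,s) da = 1), let t : S → ℝ be a deterministic target policy, and let r : ℝ × S → ℝ. Suppose that for each s ∈ S the function a ↦ r(a,s)·π₁(a,s) is twice differentiable with second derivative bounded in absolute value by M. Let K : ℝ → ℝ be integrable with ∫ K = 1, ∫ u·K(u) du = 0, and κ₂ := ∫ u²·|K(u)| du < ∞. Then for every h > 0, |∑_{s∈S} (1/h)·∫_ℝ K((a − t(s))/h)·r(a,s)·π₁(a,s) da − ∑_{s∈S} r(t(s), s)·π₁(t(s), s)| ≤ |S|·(M·κ₂/2)·h², where |S| is the cardinality of S. -/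

import Mathlib

open MeasureTheory

lemma int_abs_id (c : ℝ) : ∫ u in (0:ℝ)..c, |u| = c * |c| / 2 := by
  rcases le_or_gt 0 c with hc | hc
  · rw [abs_of_nonneg hc]
    rw [intervalIntegral.integral_congr (g := fun u => u) ?_, integral_id]
    · ring
    · intro u hu
      rw [Set.uIcc_of_le hc] at hu
      exact abs_of_nonneg hu.1
  · rw [abs_of_neg hc]
    rw [intervalIntegral.integral_congr (g := fun u => -u) ?_]
    · rw [intervalIntegral.integral_neg, integral_id]; ring
    · intro u hu
      rw [Set.uIcc_of_ge hc.le] at hu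
      exact abs_of_nonpos hu.2

lemma taylor2 {g : ℝ → ℝ} {M : ℝ}
    (hg : ∀ z, DifferentiableAt ℝ g z)
    (hg' : ∀ z, DifferentiableAt ℝ (deriv g) z)
    (hg'' : ∀ z, |deriv (deriv g) z| ≤ M) (x y : ℝ) :
    |g y - g x - deriv g x * (y - x)| ≤ M * (y - x) ^ 2 / 2 := by
  have hM : 0 ≤ M := le_trans (abs_nonneg _) (hg'' 0)
  have hlip : LipschitzWith ⟨M, hM⟩ (deriv g) := by
    apply lipschitzWith_of_nnnorm_deriv_le (fun z => hg' z)
    intro z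
    apply NNReal.coe_le_coe.mp
    exact (by simpa [Real.norm_eq_abs] using hg'' z : ‖deriv (deriv g) z‖ ≤ M)
  have hlip' : ∀ z, |deriv g z - deriv g x| ≤ M * |z - x| := by
    intro z
    have := hlip.dist_le_mul z x
    rw [Real.dist_eq, Real.dist_eq] at this
    exact this
  have hcont : Continuous (deriv g) := Differentiable.continuous (fun z => hg' z)
  have key : g y - g x - deriv g x * (y - x) = ∫ z in x..y, (deriv g z - deriv g x) := by
    have hd : ∀ z ∈ Set.uIcc x y, HasDerivAt (fun w => g w - deriv g x * w)
        (deriv g z - deriv g x) z := by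
      intro z _
      have h1 : HasDerivAt g (deriv g z) z := (hg z).hasDerivAt
      have h2 : HasDerivAt (fun w : ℝ => deriv g x * w) (deriv g x) z := by
        simpa using (hasDerivAt_id z).const_mul (deriv g x)
      exact h1.sub h2
    have hi : IntervalIntegrable (fun z => deriv g z - deriv g x) volume x y :=
      (hcont.sub continuous_const).intervalIntegrable x y
    have := intervalIntegral.integral_eq_sub_of_hasDerivAt hd hi
    rw [this]; ring
  rw [key]
  have hb : ‖∫ z in x..y, (deriv g z - deriv g x)‖ ≤ abs (∫ z in x..y, M * |z - x|) := by
    apply intervalIntegral.norm_integral_le_abs_of_norm_le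
    · filter_upwards with z using by simpa [Real.norm_eq_abs] using hlip' z
    · exact (continuous_const.mul ((continuous_id.sub continuous_const).abs)).intervalIntegrable x y
  have hc : (∫ z in x..y, M * |z - x|) = M * ((y - x) * |y - x| / 2) := by
    rw [intervalIntegral.integral_const_mul]
    congr 1
    have : (∫ z in x..y, |z - x|) = ∫ u in x - x..y - x, |u| :=
      intervalIntegral.integral_comp_sub_right (fun u => |u|) x
    rw [this, sub_self, int_abs_id]
  rw [Real.norm_eq_abs] at hb
  refine hb.trans ?_
  rw [hc, abs_mul, abs_of_nonneg hM, abs_div]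
  have habs : abs ((y - x) * |y - x|) = (y - x) ^ 2 := by
    rw [abs_mul, abs_abs, ← sq_abs]; ring
  rw [habs]
  simp [mul_div_assoc]

lemma key_bound {g : ℝ → ℝ} {M : ℝ}
    (hg : ∀ z, DifferentiableAt ℝ g z)
    (hg' : ∀ z, DifferentiableAt ℝ (deriv g) z)
    (hg'' : ∀ z, |deriv (deriv g) z| ≤ M)
    (K : ℝ → ℝ) (hKint : Integrable K) (hK1 : ∫ u, K u = 1)
    (hKu : Integrable (fun u => u * K u)) (hKu0 : ∫ u, u * K u = 0)
    (hKu2 : Integrable (fun u => u ^ 2 * |K u|))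
    (h : ℝ) (hh : 0 < h) (c : ℝ) :
    |(1 / h) * (∫ a, K ((a - c) / h) * g a) - g c|
      ≤ M * (∫ u, u ^ 2 * |K u|) / 2 * h ^ 2 := by
  have hM : 0 ≤ M := le_trans (abs_nonneg _) (hg'' 0)
  have hne : h ≠ 0 := hh.ne'
  set F : ℝ → ℝ := fun a => K ((a - c) / h) * g a with hF
  have hcv : (1 / h) * (∫ a, F a) = ∫ u, K u * g (h * u + c) := by
    have h3 : (fun x : ℝ => K x * g (h * x + c)) = fun x => F (h * x + c) := by
      funext x
      simp only [hF]
      congr 2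
      field_simp
      ring
    rw [h3]
    have h1 : (∫ x, F (h * x + c)) = |h⁻¹| • ∫ y, F (y + c) :=
      MeasureTheory.Measure.integral_comp_mul_left (fun y => F (y + c)) h
    rw [h1, integral_add_right_eq_self F c, abs_of_pos (inv_pos.mpr hh), smul_eq_mul,
      one_div]
  have hTay : ∀ u : ℝ, |g (h * u + c) - g c - deriv g c * (h * u)| ≤ M * (h * u) ^ 2 / 2 := by
    intro u
    have := taylor2 hg hg' hg'' c (h * u + c)
    simpa using this
  set R : ℝ → ℝ := fun u => g (h * u + c) - g c - deriv g c * (h * u) with hR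
  have hgc : Continuous g := Differentiable.continuous (fun z => hg z)
  have hRcont : Continuous R :=
    ((hgc.comp ((continuous_const.mul continuous_id).add continuous_const)).sub
      continuous_const).sub (continuous_const.mul (continuous_const.mul continuous_id))
  have hptw : ∀ u : ℝ, |K u * R u| ≤ M * h ^ 2 / 2 * (u ^ 2 * |K u|) := by
    intro u
    rw [abs_mul]
    calc |K u| * |R u| ≤ |K u| * (M * (h * u) ^ 2 / 2) :=
          mul_le_mul_of_nonneg_left (hTay u) (abs_nonneg _)
      _ = M * h ^ 2 / 2 * (u ^ 2 * |K u|) := by ring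
  have i1 : Integrable (fun u => g c * K u) := hKint.const_mul _
  have i2 : Integrable (fun u => (h * deriv g c) * (u * K u)) := hKu.const_mul _
  have i3 : Integrable (fun u => K u * R u) := by
    refine (hKu2.const_mul (M * h ^ 2 / 2)).mono'
      (hKint.aestronglyMeasurable.mul hRcont.aestronglyMeasurable) ?_
    filter_upwards with u
    rw [Real.norm_eq_abs]
    exact hptw u
  have hsplit : (fun u => K u * g (h * u + c))
      = fun u => (g c * K u + (h * deriv g c) * (u * K u)) + K u * R u := by
    funext u
    simp only [hR]
    ring
  have hint : (∫ u, K u * g (h * u + c)) = g c + ∫ u, K u * R u := by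
    have e1 : (∫ u, K u * g (h * u + c))
        = (∫ u, (g c * K u + (h * deriv g c) * (u * K u))) + ∫ u, K u * R u := by
      rw [hsplit]
      exact integral_add (i1.add i2) i3
    have e2 : (∫ u, (g c * K u + (h * deriv g c) * (u * K u)))
        = (∫ u, g c * K u) + ∫ u, (h * deriv g c) * (u * K u) := integral_add i1 i2
    rw [e1, e2, integral_const_mul, integral_const_mul, hK1, hKu0]
    ring
  have hKR : |∫ u, K u * R u| ≤ M * (∫ u, u ^ 2 * |K u|) / 2 * h ^ 2 := by
    calc |∫ u, K u * R u| ≤ ∫ u, |K u * R u| := by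
          rw [← Real.norm_eq_abs]
          refine (norm_integral_le_integral_norm _).trans_eq ?_
          simp [Real.norm_eq_abs, abs_mul]
      _ ≤ ∫ u, M * h ^ 2 / 2 * (u ^ 2 * |K u|) :=
          integral_mono i3.abs (hKu2.const_mul _) (fun u => hptw u)
      _ = M * (∫ u, u ^ 2 * |K u|) / 2 * h ^ 2 := by
          rw [integral_const_mul]; ring
  rw [hcv, hint]
  simpa using hKR


/-- Continuous-action leading-term bound: for a joint density `p1` on `ℝ × S`
(`S` finite), a deterministic target policy `t : S → ℝ`, rewards `r` such that
`a ↦ r(a,s) p1(a,s)` is twice differentiable with second derivative bounded by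
`M`, and a kernel `K` with `∫ K = 1`, vanishing first moment and second
absolute moment `κ₂`, the kernel-smoothed estimand is within
`|S| (M κ₂ / 2) h²` of `∑_s r(t s, s) p1(t s, s)`. -/
theorem stmt_9 {S : Type*} [Fintype S]
    (p1 : ℝ × S → ℝ) (hp1nonneg : ∀ x, 0 ≤ p1 x)
    (hp1int : ∀ s : S, Integrable (fun a => p1 (a, s)))
    (hp1sum : ∑ s : S, ∫ a, p1 (a, s) = 1)
    (t : S → ℝ) (r : ℝ × S → ℝ) (M : ℝ)
    (hg : ∀ (s : S) (x : ℝ), DifferentiableAt ℝ (fun a => r (a, s) * p1 (a, s)) x)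
    (hg' : ∀ (s : S) (x : ℝ),
      DifferentiableAt ℝ (deriv (fun a => r (a, s) * p1 (a, s))) x)
    (hg'' : ∀ (s : S) (x : ℝ),
      |deriv (deriv (fun a => r (a, s) * p1 (a, s))) x| ≤ M)
    (K : ℝ → ℝ) (hKint : Integrable K) (hK1 : ∫ u, K u = 1)
    (hKu : Integrable (fun u => u * K u)) (hKu0 : ∫ u, u * K u = 0)
    (hKu2 : Integrable (fun u => u ^ 2 * |K u|))
    (h : ℝ) (hh : 0 < h) :
    |(∑ s : S, (1 / h) * ∫ a, K ((a - t s) / h) * (r (a, s) * p1 (a, s)))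
        - ∑ s : S, r (t s, s) * p1 (t s, s)|
      ≤ (Fintype.card S : ℝ) * (M * (∫ u, u ^ 2 * |K u|) / 2) * h ^ 2 := by
  have hper : ∀ s : S,
      |(1 / h) * (∫ a, K ((a - t s) / h) * (r (a, s) * p1 (a, s)))
        - r (t s, s) * p1 (t s, s)|
      ≤ M * (∫ u, u ^ 2 * |K u|) / 2 * h ^ 2 := fun s =>
    key_bound (hg s) (hg' s) (hg'' s) K hKint hK1 hKu hKu0 hKu2 h hh (t s)
  rw [← Finset.sum_sub_distrib]
  calc |∑ s : S, ((1 / h) * (∫ a, K ((a - t s) / h) * (r (a, s) * p1 (a, s)))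
          - r (t s, s) * p1 (t s, s))|
      ≤ ∑ s : S, |(1 / h) * (∫ a, K ((a - t s) / h) * (r (a, s) * p1 (a, s)))
          - r (t s, s) * p1 (t s, s)| := Finset.abs_sum_le_sum_abs _ _
    _ ≤ ∑ _s : S, M * (∫ u, u ^ 2 * |K u|) / 2 * h ^ 2 :=
        Finset.sum_le_sum (fun s _ => hper s)
    _ = (Fintype.card S : ℝ) * (M * (∫ u, u ^ 2 * |K u|) / 2) * h ^ 2 := by
        rw [Finset.sum_const, nsmul_eq_mul, Finset.card_univ]; ring
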